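/- The set consisting of all 6-cycles of {1,...,6} together with all derangements of cycle type (2,4) whose 2-cycle contains the element 1 can be partitioned into 30 subsets, each of which is a 1-factorization of L_{6,1} containing exactly one derangement of cycle type (2,4) (with 1 in its 2-cycle) and exactly four 6-cycles. Moreover, each 6-cycle lies in exactly one of these subsets. -/

import Mathlib

def c6 (a b c d e f : Fin 6) : Equiv.Perm (Fin 6) := List.formPerm [a,b,c,d,e,f]

def c24 (a b c d e : Fin 6) : Equiv.Perm (Fin 6) :=
  List.formPerm [(0 : Fin 6), a] * List.formPerm [b,c,d,e]

def P12 : Finset (Finset (Equiv.Perm (Fin 6))) :=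
  {({(c24 1 2 3 4 5), (c6 0 2 1 3 5 4), (c6 0 3 1 4 2 5), (c6 0 4 1 5 3 2), (c6 0 5 1 2 4 3)} : Finset (Equiv.Perm (Fin 6))),
   ({(c24 1 2 3 5 4), (c6 0 2 1 3 4 5), (c6 0 3 1 5 2 4), (c6 0 4 1 2 5 3), (c6 0 5 1 4 3 2)} : Finset (Equiv.Perm (Fin 6))),
   ({(c24 1 2 4 5 3), (c6 0 2 1 4 3 5), (c6 0 3 1 2 5 4), (c6 0 4 1 5 2 3), (c6 0 5 1 3 4 2)} : Finset (Equiv.Perm (Fin 6))),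
   ({(c24 1 2 4 3 5), (c6 0 2 1 4 5 3), (c6 0 3 1 5 4 2), (c6 0 4 1 3 2 5), (c6 0 5 1 2 3 4)} : Finset (Equiv.Perm (Fin 6))),
   ({(c24 1 2 5 4 3), (c6 0 2 1 5 3 4), (c6 0 3 1 2 4 5), (c6 0 4 1 3 5 2), (c6 0 5 1 4 2 3)} : Finset (Equiv.Perm (Fin 6))),
   ({(c24 1 2 5 3 4), (c6 0 2 1 5 4 3), (c6 0 3 1 4 5 2), (c6 0 4 1 2 3 5), (c6 0 5 1 3 2 4)} : Finset (Equiv.Perm (Fin 6))),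
   ({(c24 2 1 3 4 5), (c6 0 1 2 3 5 4), (c6 0 3 2 4 1 5), (c6 0 4 2 5 3 1), (c6 0 5 2 1 4 3)} : Finset (Equiv.Perm (Fin 6))),
   ({(c24 2 1 3 5 4), (c6 0 1 2 3 4 5), (c6 0 3 2 5 1 4), (c6 0 4 2 1 5 3), (c6 0 5 2 4 3 1)} : Finset (Equiv.Perm (Fin 6))),
   ({(c24 2 1 4 5 3), (c6 0 1 2 4 3 5), (c6 0 3 2 1 5 4), (c6 0 4 2 5 1 3), (c6 0 5 2 3 4 1)} : Finset (Equiv.Perm (Fin 6))),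
   ({(c24 2 1 4 3 5), (c6 0 1 2 4 5 3), (c6 0 3 2 5 4 1), (c6 0 4 2 3 1 5), (c6 0 5 2 1 3 4)} : Finset (Equiv.Perm (Fin 6))),
   ({(c24 2 1 5 4 3), (c6 0 1 2 5 3 4), (c6 0 3 2 1 4 5), (c6 0 4 2 3 5 1), (c6 0 5 2 4 1 3)} : Finset (Equiv.Perm (Fin 6))),
   ({(c24 2 1 5 3 4), (c6 0 1 2 5 4 3), (c6 0 3 2 4 5 1), (c6 0 4 2 1 3 5), (c6 0 5 2 3 1 4)} : Finset (Equiv.Perm (Fin 6))),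
   ({(c24 3 1 2 4 5), (c6 0 1 3 2 5 4), (c6 0 2 3 4 1 5), (c6 0 4 3 5 2 1), (c6 0 5 3 1 4 2)} : Finset (Equiv.Perm (Fin 6))),
   ({(c24 3 1 2 5 4), (c6 0 1 3 2 4 5), (c6 0 2 3 5 1 4), (c6 0 4 3 1 5 2), (c6 0 5 3 4 2 1)} : Finset (Equiv.Perm (Fin 6))),
   ({(c24 3 1 4 5 2), (c6 0 1 3 4 2 5), (c6 0 2 3 1 5 4), (c6 0 4 3 5 1 2), (c6 0 5 3 2 4 1)} : Finset (Equiv.Perm (Fin 6))),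
   ({(c24 3 1 4 2 5), (c6 0 1 3 4 5 2), (c6 0 2 3 5 4 1), (c6 0 4 3 2 1 5), (c6 0 5 3 1 2 4)} : Finset (Equiv.Perm (Fin 6))),
   ({(c24 3 1 5 4 2), (c6 0 1 3 5 2 4), (c6 0 2 3 1 4 5), (c6 0 4 3 2 5 1), (c6 0 5 3 4 1 2)} : Finset (Equiv.Perm (Fin 6))),
   ({(c24 3 1 5 2 4), (c6 0 1 3 5 4 2), (c6 0 2 3 4 5 1), (c6 0 4 3 1 2 5), (c6 0 5 3 2 1 4)} : Finset (Equiv.Perm (Fin 6))),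
   ({(c24 4 1 2 3 5), (c6 0 1 4 2 5 3), (c6 0 2 4 3 1 5), (c6 0 3 4 5 2 1), (c6 0 5 4 1 3 2)} : Finset (Equiv.Perm (Fin 6))),
   ({(c24 4 1 2 5 3), (c6 0 1 4 2 3 5), (c6 0 2 4 5 1 3), (c6 0 3 4 1 5 2), (c6 0 5 4 3 2 1)} : Finset (Equiv.Perm (Fin 6))),
   ({(c24 4 1 3 5 2), (c6 0 1 4 3 2 5), (c6 0 2 4 1 5 3), (c6 0 3 4 5 1 2), (c6 0 5 4 2 3 1)} : Finset (Equiv.Perm (Fin 6))),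
   ({(c24 4 1 3 2 5), (c6 0 1 4 3 5 2), (c6 0 2 4 5 3 1), (c6 0 3 4 2 1 5), (c6 0 5 4 1 2 3)} : Finset (Equiv.Perm (Fin 6))),
   ({(c24 4 1 5 3 2), (c6 0 1 4 5 2 3), (c6 0 2 4 1 3 5), (c6 0 3 4 2 5 1), (c6 0 5 4 3 1 2)} : Finset (Equiv.Perm (Fin 6))),
   ({(c24 4 1 5 2 3), (c6 0 1 4 5 3 2), (c6 0 2 4 3 5 1), (c6 0 3 4 1 2 5), (c6 0 5 4 2 1 3)} : Finset (Equiv.Perm (Fin 6))),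
   ({(c24 5 1 2 3 4), (c6 0 1 5 2 4 3), (c6 0 2 5 3 1 4), (c6 0 3 5 4 2 1), (c6 0 4 5 1 3 2)} : Finset (Equiv.Perm (Fin 6))),
   ({(c24 5 1 2 4 3), (c6 0 1 5 2 3 4), (c6 0 2 5 4 1 3), (c6 0 3 5 1 4 2), (c6 0 4 5 3 2 1)} : Finset (Equiv.Perm (Fin 6))),
   ({(c24 5 1 3 4 2), (c6 0 1 5 3 2 4), (c6 0 2 5 1 4 3), (c6 0 3 5 4 1 2), (c6 0 4 5 2 3 1)} : Finset (Equiv.Perm (Fin 6))),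
   ({(c24 5 1 3 2 4), (c6 0 1 5 3 4 2), (c6 0 2 5 4 3 1), (c6 0 3 5 2 1 4), (c6 0 4 5 1 2 3)} : Finset (Equiv.Perm (Fin 6))),
   ({(c24 5 1 4 3 2), (c6 0 1 5 4 2 3), (c6 0 2 5 1 3 4), (c6 0 3 5 2 4 1), (c6 0 4 5 3 1 2)} : Finset (Equiv.Perm (Fin 6))),
   ({(c24 5 1 4 2 3), (c6 0 1 5 4 3 2), (c6 0 2 5 3 4 1), (c6 0 3 5 1 2 4), (c6 0 4 5 2 1 3)} : Finset (Equiv.Perm (Fin 6)))}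

lemma exu {α : Type*} (F : Finset α) (q : α → Prop) [DecidablePred q]
    (h : (F.filter q).card = 1) : ∃! x, x ∈ F ∧ q x := by
  obtain ⟨a, ha⟩ := Finset.card_eq_one.mp h
  have hmem := Finset.mem_filter.mp (ha ▸ Finset.mem_singleton_self a)
  refine ⟨a, ⟨hmem.1, hmem.2⟩, fun y hy => ?_⟩
  have : y ∈ F.filter q := Finset.mem_filter.mpr ⟨hy.1, hy.2⟩
  rw [ha] at this
  exact Finset.mem_singleton.mp this

lemma bridge6 (σ : Equiv.Perm (Fin 6)) (h : σ.cycleType = {6}) :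
    ∃ a b c d e : Fin 6, List.Nodup [0,a,b,c,d,e] ∧ σ = c6 0 a b c d e := by
  have hc : σ.IsCycle := Equiv.Perm.card_cycleType_eq_one.mp (by rw [h]; rfl)
  have hord : orderOf σ = 6 := by
    rw [← Equiv.Perm.lcm_cycleType, h]
    rfl
  have h6 : σ ^ 6 = 1 := by
    have := pow_orderOf_eq_one σ
    rwa [hord] at this
  have hsupp : σ.support = Finset.univ := by
    apply Finset.eq_univ_of_card
    rw [← Equiv.Perm.sum_cycleType, h]
    rfl
  have der : ∀ x : Fin 6, σ x ≠ x := fun x =>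
    Equiv.Perm.mem_support.mp (hsupp ▸ Finset.mem_univ x)
  have key : ∀ n : ℕ, 0 < n → n < 6 → ∀ y : Fin 6, (σ ^ n) y ≠ y := by
    intro n hn hn6 y hfx
    have h1 : σ ^ n = 1 := (hc.pow_eq_one_iff' (der y)).mpr hfx
    have hd := orderOf_dvd_of_pow_eq_one h1
    rw [hord] at hd
    exact absurd (Nat.le_of_dvd hn hd) (by omega)
  have kd : ∀ i j : ℕ, i < j → j < 6 → (σ ^ i) 0 ≠ (σ ^ j) 0 := by
    intro i j hij hj heq
    apply key (j - i) (by omega) (by omega) ((σ ^ i) 0)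
    rw [← Equiv.Perm.mul_apply, ← pow_add, Nat.sub_add_cancel (le_of_lt hij)]
    exact heq.symm
  have e0 : (σ ^ 0) 0 = 0 := by simp
  have e1 : (σ ^ 1) 0 = σ 0 := by simp
  have hnd : List.Nodup [0, σ 0, (σ^2) 0, (σ^3) 0, (σ^4) 0, (σ^5) 0] := by
    have : ([0, σ 0, (σ^2) 0, (σ^3) 0, (σ^4) 0, (σ^5) 0] : List (Fin 6)) =
        (List.range 6).map (fun n => (σ ^ n) 0) := by
      simp [List.range_succ, e0, e1]
    rw [this]
    refine List.Nodup.map_on ?_ (List.nodup_range)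
    intro i hi j hj hf
    rw [List.mem_range] at hi hj
    rcases lt_trichotomy i j with hlt | heq | hgt
    · exact absurd hf (kd i j hlt hj)
    · exact heq
    · exact absurd hf.symm (kd j i hgt hi)
  refine ⟨σ 0, (σ^2) 0, (σ^3) 0, (σ^4) 0, (σ^5) 0, hnd, ?_⟩
  have hmem : ∀ x : Fin 6, x ∈ [0, σ 0, (σ^2) 0, (σ^3) 0, (σ^4) 0, (σ^5) 0] := by
    intro x
    have hcard : ([0, σ 0, (σ^2) 0, (σ^3) 0, (σ^4) 0, (σ^5) 0] : List (Fin 6)).toFinset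
        = Finset.univ := by
      apply Finset.eq_univ_of_card
      rw [List.toFinset_card_of_nodup hnd]
      rfl
    rw [← List.mem_toFinset, hcard]
    exact Finset.mem_univ x
  have H0 := List.formPerm_apply_getElem _ hnd 0 (by norm_num)
  have H1 := List.formPerm_apply_getElem _ hnd 1 (by norm_num)
  have H2 := List.formPerm_apply_getElem _ hnd 2 (by norm_num)
  have H3 := List.formPerm_apply_getElem _ hnd 3 (by norm_num)
  have H4 := List.formPerm_apply_getElem _ hnd 4 (by norm_num)
  have H5 := List.formPerm_apply_getElem _ hnd 5 (by norm_num)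
  simp only [List.length_cons, List.length_nil, List.getElem_cons_zero,
    List.getElem_cons_succ, Nat.reduceAdd, Nat.reduceMod] at H0 H1 H2 H3 H4 H5
  refine Equiv.ext fun x => ?_
  have hx := hmem x
  simp only [List.mem_cons, List.not_mem_nil, or_false] at hx
  show σ x = List.formPerm [0, σ 0, (σ^2) 0, (σ^3) 0, (σ^4) 0, (σ^5) 0] x
  rcases hx with rfl | rfl | rfl | rfl | rfl | rfl
  · rw [H0]
  · rw [H1]
    have h2 : (σ ^ 2 : Equiv.Perm (Fin 6)) = σ * σ ^ 1 := pow_succ' σ 1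
    rw [h2, Equiv.Perm.mul_apply, pow_one]
  · rw [H2]
    have h3 : (σ ^ 3 : Equiv.Perm (Fin 6)) = σ * σ ^ 2 := pow_succ' σ 2
    rw [h3, Equiv.Perm.mul_apply]
  · rw [H3]
    have h4 : (σ ^ 4 : Equiv.Perm (Fin 6)) = σ * σ ^ 3 := pow_succ' σ 3
    rw [h4, Equiv.Perm.mul_apply]
  · rw [H4]
    have h5 : (σ ^ 5 : Equiv.Perm (Fin 6)) = σ * σ ^ 4 := pow_succ' σ 4
    rw [h5, Equiv.Perm.mul_apply]
  · rw [H5]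
    calc σ ((σ^5) 0) = (σ * σ^5) 0 := rfl
    _ = (σ ^ 6) 0 := by rw [← pow_succ']
    _ = 0 := by rw [h6]; rfl

open Equiv Equiv.Perm in
lemma bridge24 (σ : Equiv.Perm (Fin 6)) (h : σ.cycleType = {2,4}) (h0 : σ (σ 0) = 0) :
    ∃ a b c d e : Fin 6, List.Nodup [0,a,b,c,d,e] ∧ σ = c24 a b c d e := by
  classical
  have hord : orderOf σ = 4 := by
    rw [← Equiv.Perm.lcm_cycleType, h]
    rfl
  have h4 : σ ^ 4 = 1 := by
    have := pow_orderOf_eq_one σ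
    rwa [hord] at this
  have hsupp : σ.support = Finset.univ := by
    apply Finset.eq_univ_of_card
    rw [← Equiv.Perm.sum_cycleType, h]
    rfl
  have der : ∀ x : Fin 6, σ x ≠ x := fun x =>
    Equiv.Perm.mem_support.mp (hsupp ▸ Finset.mem_univ x)
  -- the orbit of 0
  have orbit0 : ∀ n : ℕ, (σ ^ n) 0 = 0 ∨ (σ ^ n) 0 = σ 0 := by
    intro n
    induction n with
    | zero => left; rfl
    | succ n ih =>
      have hs : (σ ^ (n+1)) 0 = σ ((σ ^ n) 0) := by
        rw [pow_succ', Equiv.Perm.mul_apply]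
      rcases ih with h' | h'
      · right; rw [hs, h']
      · left; rw [hs, h', h0]
  -- the cycle of 0 has support {0, σ 0} hence card 2
  have hc0cyc : (σ.cycleOf 0).IsCycle := Equiv.Perm.isCycle_cycleOf σ (der 0)
  have hmemtype : ∀ x : Fin 6, (σ.cycleOf x).support.card ∈ ({2,4} : Multiset ℕ) := by
    intro x
    have hmem : σ.cycleOf x ∈ σ.cycleFactorsFinset :=
      Equiv.Perm.cycleOf_mem_cycleFactorsFinset_iff.mpr (Equiv.Perm.mem_support.mpr (der x))
    have : (Finset.card ∘ Equiv.Perm.support) (σ.cycleOf x) ∈ σ.cycleType :=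
      Multiset.mem_map_of_mem _ hmem
    rwa [h] at this
  have hsupp0 : (σ.cycleOf 0).support = {0, σ 0} := by
    have hsub : ({0, σ 0} : Finset (Fin 6)) ⊆ (σ.cycleOf 0).support := by
      intro x hx
      rcases Finset.mem_insert.mp hx with rfl | hx
      · exact Equiv.Perm.mem_support_cycleOf_iff.mpr
          ⟨Equiv.Perm.SameCycle.refl _ _, Equiv.Perm.mem_support.mpr (der 0)⟩
      · rw [Finset.mem_singleton] at hx
        subst hx
        exact Equiv.Perm.mem_support_cycleOf_iff.mpr
          ⟨⟨1, by simp⟩, Equiv.Perm.mem_support.mpr (der 0)⟩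
    have hcard2 : (σ.cycleOf 0).support.card = 2 := by
      rcases Multiset.mem_cons.mp (hmemtype 0) with h2 | h4'
      · exact h2
      · exfalso
        rw [Multiset.mem_singleton] at h4'
        have hordc : orderOf (σ.cycleOf 0) = 4 := by rw [hc0cyc.orderOf, h4']
        have hfix : ((σ.cycleOf 0) ^ 2) 0 = 0 := by
          rw [Equiv.Perm.cycleOf_pow_apply_self]
          calc (σ ^ 2) 0 = σ (σ 0) := by rw [pow_succ, pow_one, Equiv.Perm.mul_apply]
          _ = 0 := h0
        have hne : (σ.cycleOf 0) 0 ≠ 0 := by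
          rw [Equiv.Perm.cycleOf_apply_self]; exact der 0
        have : (σ.cycleOf 0) ^ 2 = 1 := (hc0cyc.pow_eq_one_iff' hne).mpr hfix
        have := orderOf_dvd_of_pow_eq_one this
        rw [hordc] at this
        exact absurd (Nat.le_of_dvd (by norm_num) this) (by norm_num)
    have hpair : ({0, σ 0} : Finset (Fin 6)).card = 2 := by
      rw [Finset.card_insert_of_notMem (by simp only [Finset.mem_singleton]; exact fun h => der 0 h.symm), Finset.card_singleton]
    exact (Finset.eq_of_subset_of_card_le hsub (by rw [hcard2, hpair])).symm
  -- choose b outside {0, σ 0}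
  obtain ⟨b, hb⟩ : ∃ b : Fin 6, b ∉ ({0, σ 0} : Finset (Fin 6)) := by
    by_contra hcon
    push_neg at hcon
    have : (Finset.univ : Finset (Fin 6)).card ≤ ({0, σ 0} : Finset (Fin 6)).card :=
      Finset.card_le_card (fun x _ => hcon x)
    have h2 : ({0, σ 0} : Finset (Fin 6)).card ≤ 2 := Finset.card_insert_le _ _ |>.trans (by simp)
    simp [Finset.card_univ] at this
    omega
  have hb0 : b ≠ 0 := fun hh => hb (by rw [hh]; exact Finset.mem_insert_self _ _)
  have hba : b ≠ σ 0 := fun hh => hb (by rw [hh]; exact Finset.mem_insert_of_mem (Finset.mem_singleton_self _))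
  -- cycleOf b has support card 4
  have hbcyc : (σ.cycleOf b).IsCycle := Equiv.Perm.isCycle_cycleOf σ (der b)
  have hbsupport : b ∈ (σ.cycleOf b).support :=
    Equiv.Perm.mem_support_cycleOf_iff.mpr ⟨Equiv.Perm.SameCycle.refl _ _, Equiv.Perm.mem_support.mpr (der b)⟩
  have hbne0 : σ.cycleOf b ≠ σ.cycleOf 0 := by
    intro heq
    rw [heq, hsupp0] at hbsupport
    rcases Finset.mem_insert.mp hbsupport with hh | hh
    · exact hb0 hh
    · exact hba (Finset.mem_singleton.mp hh)
  have hcardb : (σ.cycleOf b).support.card = 4 := by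
    rcases Multiset.mem_cons.mp (hmemtype b) with h2 | h4'
    · exfalso
      have hsub2 : ({σ.cycleOf 0, σ.cycleOf b} : Finset (Equiv.Perm (Fin 6))) ⊆ σ.cycleFactorsFinset := by
        intro g hg
        rcases Finset.mem_insert.mp hg with rfl | hg
        · exact Equiv.Perm.cycleOf_mem_cycleFactorsFinset_iff.mpr (Equiv.Perm.mem_support.mpr (der 0))
        · rw [Finset.mem_singleton] at hg
          subst hg
          exact Equiv.Perm.cycleOf_mem_cycleFactorsFinset_iff.mpr (Equiv.Perm.mem_support.mpr (der b))
      have hle : ({σ.cycleOf 0, σ.cycleOf b} : Finset (Equiv.Perm (Fin 6))).val ≤ σ.cycleFactorsFinset.val :=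
        Finset.val_le_iff.mpr hsub2
      have hmaple := Multiset.map_le_map (f := Finset.card ∘ Equiv.Perm.support) hle
      rw [← Equiv.Perm.cycleType_def, h] at hmaple
      have hval : ({σ.cycleOf 0, σ.cycleOf b} : Finset (Equiv.Perm (Fin 6))).val
          = (σ.cycleOf 0) ::ₘ {σ.cycleOf b} := by
        rw [Finset.insert_val_of_notMem (by simpa using (Ne.symm hbne0))]
        rfl
      rw [hval] at hmaple
      simp only [Multiset.map_cons, Multiset.map_singleton, Function.comp_apply] at hmaple
      have hc0 : (σ.cycleOf 0).support.card = 2 := by rw [hsupp0]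
                                                      rw [Finset.card_insert_of_notMem (by simp only [Finset.mem_singleton]; exact fun h => der 0 h.symm), Finset.card_singleton]
      rw [hc0, h2] at hmaple
      have := Multiset.count_le_of_le 2 hmaple
      simp at this
    · exact Multiset.mem_singleton.mp h4'
  have hordb : orderOf (σ.cycleOf b) = 4 := by rw [hbcyc.orderOf, hcardb]
  have keyb : ∀ k : ℕ, 0 < k → k < 4 → (σ ^ k) b ≠ b := by
    intro k hk hk4 hfx
    have hfix : ((σ.cycleOf b) ^ k) b = b := by
      rw [Equiv.Perm.cycleOf_pow_apply_self]; exact hfx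
    have hne : (σ.cycleOf b) b ≠ b := by
      rw [Equiv.Perm.cycleOf_apply_self]; exact der b
    have h1 : (σ.cycleOf b) ^ k = 1 := (hbcyc.pow_eq_one_iff' hne).mpr hfix
    have hd := orderOf_dvd_of_pow_eq_one h1
    rw [hordb] at hd
    exact absurd (Nat.le_of_dvd hk hd) (by omega)
  have hb4 : (σ ^ 4) b = b := by rw [h4]; rfl
  have horbb : ∀ k : ℕ, k ≤ 4 → (σ ^ k) b ≠ 0 ∧ (σ ^ k) b ≠ σ 0 := by
    intro k hk
    constructor
    · intro hh
      have : b = (σ ^ (4 - k)) 0 := by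
        rw [← hh, ← Equiv.Perm.mul_apply, ← pow_add]
        rw [Nat.sub_add_cancel hk, hb4]
      rcases orbit0 (4 - k) with h' | h'
      · exact hb0 (by rw [this, h'])
      · exact hba (by rw [this, h'])
    · intro hh
      have : b = (σ ^ (4 - k + 1)) 0 := by
        rw [pow_add, pow_one, Equiv.Perm.mul_apply, ← hh, ← Equiv.Perm.mul_apply, ← pow_add]
        rw [Nat.sub_add_cancel hk, hb4]
      rcases orbit0 (4 - k + 1) with h' | h'
      · exact hb0 (by rw [this, h'])
      · exact hba (by rw [this, h'])
  have kd : ∀ i j : ℕ, i < j → j < 4 → (σ ^ i) b ≠ (σ ^ j) b := by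
    intro i j hij hj heq
    apply keyb (j - i) (by omega) (by omega)
    have hji : j - i + i = j := by omega
    have e1 : (σ ^ (j - i)) ((σ ^ j) b) = (σ ^ j) b := by
      conv_lhs => rw [← heq]
      rw [← Equiv.Perm.mul_apply, ← pow_add, hji]
    have e3 : (σ ^ ((4 - j) + ((j - i) + j))) b = b := by
      rw [pow_add, Equiv.Perm.mul_apply, pow_add, Equiv.Perm.mul_apply, e1,
        ← Equiv.Perm.mul_apply, ← pow_add, Nat.sub_add_cancel (by omega), hb4]
    have e4 : (4 - j) + ((j - i) + j) = (j - i) + 4 := by omega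
    rw [e4, pow_add, Equiv.Perm.mul_apply, hb4] at e3
    exact e3
  refine ⟨σ 0, b, (σ ^ 1) b, (σ ^ 2) b, (σ ^ 3) b, ?_, ?_⟩
  · simp only [List.nodup_cons, List.mem_cons, List.not_mem_nil, or_false, List.nodup_nil,
      and_true, not_or, not_false_eq_true]
    refine ⟨⟨fun h => der 0 h.symm, hb0.symm, (horbb 1 (by omega)).1.symm,
        (horbb 2 (by omega)).1.symm, (horbb 3 (by omega)).1.symm⟩,
      ⟨hba.symm, (horbb 1 (by omega)).2.symm, (horbb 2 (by omega)).2.symm,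
        (horbb 3 (by omega)).2.symm⟩,
      ⟨fun h => keyb 1 (by omega) (by omega) h.symm,
       fun h => keyb 2 (by omega) (by omega) h.symm,
       fun h => keyb 3 (by omega) (by omega) h.symm⟩,
      ⟨kd 1 2 (by omega) (by omega), kd 1 3 (by omega) (by omega)⟩,
      kd 2 3 (by omega) (by omega)⟩
  · have hnd : List.Nodup [0, σ 0, b, (σ ^ 1) b, (σ ^ 2) b, (σ ^ 3) b] := by
      simp only [List.nodup_cons, List.mem_cons, List.not_mem_nil, or_false, List.nodup_nil,
        and_true, not_or, not_false_eq_true]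
      refine ⟨⟨fun h => der 0 h.symm, hb0.symm, (horbb 1 (by omega)).1.symm,
          (horbb 2 (by omega)).1.symm, (horbb 3 (by omega)).1.symm⟩,
        ⟨hba.symm, (horbb 1 (by omega)).2.symm, (horbb 2 (by omega)).2.symm,
          (horbb 3 (by omega)).2.symm⟩,
        ⟨fun h => keyb 1 (by omega) (by omega) h.symm,
         fun h => keyb 2 (by omega) (by omega) h.symm,
         fun h => keyb 3 (by omega) (by omega) h.symm⟩,
        ⟨kd 1 2 (by omega) (by omega), kd 1 3 (by omega) (by omega)⟩,
        kd 2 3 (by omega) (by omega)⟩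
    have hmem : ∀ x : Fin 6, x ∈ [0, σ 0, b, (σ ^ 1) b, (σ ^ 2) b, (σ ^ 3) b] := by
      intro x
      have hcard : ([0, σ 0, b, (σ ^ 1) b, (σ ^ 2) b, (σ ^ 3) b] : List (Fin 6)).toFinset
          = Finset.univ := by
        apply Finset.eq_univ_of_card
        rw [List.toFinset_card_of_nodup hnd]
        rfl
      rw [← List.mem_toFinset, hcard]
      exact Finset.mem_univ x
    have hnd4 : List.Nodup [b, (σ ^ 1) b, (σ ^ 2) b, (σ ^ 3) b] :=
      List.Nodup.sublist (List.sublist_append_right [0, σ 0] _) hnd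
    have G0 := List.formPerm_apply_getElem _ hnd4 0 (by norm_num)
    have G1 := List.formPerm_apply_getElem _ hnd4 1 (by norm_num)
    have G2 := List.formPerm_apply_getElem _ hnd4 2 (by norm_num)
    have G3 := List.formPerm_apply_getElem _ hnd4 3 (by norm_num)
    simp only [List.length_cons, List.length_nil, List.getElem_cons_zero,
      List.getElem_cons_succ, Nat.reduceAdd, Nat.reduceMod] at G0 G1 G2 G3
    have hp : List.formPerm [(0 : Fin 6), σ 0] = Equiv.swap 0 (σ 0) := List.formPerm_pair _ _
    have hn0 : (0 : Fin 6) ∉ [b, (σ ^ 1) b, (σ ^ 2) b, (σ ^ 3) b] := by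
      simp only [List.mem_cons, List.not_mem_nil, or_false, not_or]
      exact ⟨fun h => hb0 h.symm, fun h => (horbb 1 (by omega)).1 h.symm,
        fun h => (horbb 2 (by omega)).1 h.symm, fun h => (horbb 3 (by omega)).1 h.symm⟩
    have hna : σ 0 ∉ [b, (σ ^ 1) b, (σ ^ 2) b, (σ ^ 3) b] := by
      simp only [List.mem_cons, List.not_mem_nil, or_false, not_or]
      exact ⟨fun h => hba h.symm, fun h => (horbb 1 (by omega)).2 h.symm,
        fun h => (horbb 2 (by omega)).2 h.symm, fun h => (horbb 3 (by omega)).2 h.symm⟩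
    have F0 : List.formPerm [b, (σ ^ 1) b, (σ ^ 2) b, (σ ^ 3) b] 0 = 0 :=
      List.formPerm_apply_of_notMem hn0
    have Fa : List.formPerm [b, (σ ^ 1) b, (σ ^ 2) b, (σ ^ 3) b] (σ 0) = σ 0 :=
      List.formPerm_apply_of_notMem hna
    refine Equiv.ext fun x => ?_
    have hx := hmem x
    simp only [List.mem_cons, List.not_mem_nil, or_false] at hx
    show σ x = (List.formPerm [(0 : Fin 6), σ 0]
        * List.formPerm [b, (σ ^ 1) b, (σ ^ 2) b, (σ ^ 3) b]) x
    rw [Equiv.Perm.mul_apply, hp]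
    rcases hx with rfl | rfl | rfl | rfl | rfl | rfl
    · rw [F0, Equiv.swap_apply_left]
    · rw [Fa, Equiv.swap_apply_right]
      exact h0
    · rw [G0, Equiv.swap_apply_of_ne_of_ne (horbb 1 (by omega)).1 (horbb 1 (by omega)).2]
      rw [pow_one]
    · rw [G1, Equiv.swap_apply_of_ne_of_ne (horbb 2 (by omega)).1 (horbb 2 (by omega)).2]
      have h2 : (σ ^ 2 : Equiv.Perm (Fin 6)) = σ * σ ^ 1 := pow_succ' σ 1
      rw [h2, Equiv.Perm.mul_apply]
    · rw [G2, Equiv.swap_apply_of_ne_of_ne (horbb 3 (by omega)).1 (horbb 3 (by omega)).2]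
      have h3 : (σ ^ 3 : Equiv.Perm (Fin 6)) = σ * σ ^ 2 := pow_succ' σ 2
      rw [h3, Equiv.Perm.mul_apply]
    · rw [G3, Equiv.swap_apply_of_ne_of_ne hb0 hba]
      calc σ ((σ ^ 3) b) = (σ * σ ^ 3) b := rfl
      _ = (σ ^ 4) b := by rw [← pow_succ']
      _ = b := hb4

lemma cyc6 (a b c d e f : Fin 6) (h : List.Nodup [a,b,c,d,e,f]) :
    (c6 a b c d e f).cycleType = {6} := by
  have hc : (c6 a b c d e f).IsCycle := List.isCycle_formPerm h (by norm_num)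
  have hs : (c6 a b c d e f).support = ([a,b,c,d,e,f] : List (Fin 6)).toFinset :=
    List.support_formPerm_of_nodup _ h
      (fun x hx => by simpa using congrArg List.length hx)
  rw [hc.cycleType, hs, List.toFinset_card_of_nodup h]
  rfl

lemma cyc24 (a b c d e : Fin 6) (h : List.Nodup [0,a,b,c,d,e]) :
    (c24 a b c d e).cycleType = {2,4} ∧ (c24 a b c d e) ((c24 a b c d e) 0) = 0 := by
  have h' : ([(0:Fin 6),a]).Nodup ∧ ([b,c,d,e] : List (Fin 6)).Nodup ∧
      ([(0:Fin 6),a]).Disjoint [b,c,d,e] := List.nodup_append'.mp (by exact h)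
  have hdisj : (List.formPerm [(0:Fin 6),a]).Disjoint (List.formPerm [b,c,d,e]) := by
    intro x
    by_cases hx : x ∈ ([(0:Fin 6),a] : List (Fin 6))
    · right; exact List.formPerm_apply_of_notMem (fun hx2 => h'.2.2 hx hx2)
    · left; exact List.formPerm_apply_of_notMem hx
  have ha0 : a ≠ 0 := by
    intro hh; subst hh; simp at h'
  have hc4 : (List.formPerm [b,c,d,e] : Equiv.Perm (Fin 6)).IsCycle :=
    List.isCycle_formPerm h'.2.1 (by norm_num)
  have hs4 : (List.formPerm [b,c,d,e] : Equiv.Perm (Fin 6)).support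
      = ([b,c,d,e] : List (Fin 6)).toFinset :=
    List.support_formPerm_of_nodup _ h'.2.1 (fun x hx => by simpa using congrArg List.length hx)
  have hct : (c24 a b c d e).cycleType = {2, 4} := by
    show (List.formPerm [(0:Fin 6),a] * List.formPerm [b,c,d,e]).cycleType = {2,4}
    rw [Equiv.Perm.Disjoint.cycleType_mul hdisj]
    have e2 : (List.formPerm [(0:Fin 6),a]).cycleType = {2} := by
      rw [List.formPerm_pair]
      have hcs : (Equiv.swap (0:Fin 6) a).IsCycle := Equiv.Perm.isCycle_swap (Ne.symm ha0)
      rw [hcs.cycleType, Equiv.Perm.support_swap (Ne.symm ha0)]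
      rw [Finset.card_insert_of_notMem (by simpa using Ne.symm ha0), Finset.card_singleton]
    have e4 : (List.formPerm [b,c,d,e] : Equiv.Perm (Fin 6)).cycleType = {4} := by
      rw [hc4.cycleType, hs4, List.toFinset_card_of_nodup h'.2.1]
      rfl
    rw [e2, e4]
    rfl
  refine ⟨hct, ?_⟩
  have hn0 : (0 : Fin 6) ∉ ([b,c,d,e] : List (Fin 6)) := h'.2.2 (by simp)
  have hna : a ∉ ([b,c,d,e] : List (Fin 6)) := h'.2.2 (by simp)
  show (List.formPerm [(0:Fin 6),a] * List.formPerm [b,c,d,e])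
      ((List.formPerm [(0:Fin 6),a] * List.formPerm [b,c,d,e]) 0) = 0
  rw [Equiv.Perm.mul_apply, Equiv.Perm.mul_apply, List.formPerm_apply_of_notMem hn0, List.formPerm_pair,
    Equiv.swap_apply_left, List.formPerm_apply_of_notMem hna, Equiv.swap_apply_right]

lemma famcard (t s1 s2 s3 s4 : Equiv.Perm (Fin 6))
    (ht : t.cycleType = ({2,4} : Multiset ℕ) ∧ t (t 0) = 0)
    (h1 : s1.cycleType = ({6} : Multiset ℕ)) (h2 : s2.cycleType = ({6} : Multiset ℕ))
    (h3 : s3.cycleType = ({6} : Multiset ℕ)) (h4 : s4.cycleType = ({6} : Multiset ℕ))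
    (hcard4 : ({s1,s2,s3,s4} : Finset (Equiv.Perm (Fin 6))).card = 4) :
    (∀ σ ∈ ({t,s1,s2,s3,s4} : Finset (Equiv.Perm (Fin 6))),
      σ.cycleType = ({6} : Multiset ℕ) ∨
        (σ.cycleType = ({2,4} : Multiset ℕ) ∧ σ (σ 0) = 0)) ∧
    (({t,s1,s2,s3,s4} : Finset (Equiv.Perm (Fin 6))).filter
      (fun σ => σ.cycleType = ({2,4} : Multiset ℕ) ∧ σ (σ 0) = 0)).card = 1 ∧
    (({t,s1,s2,s3,s4} : Finset (Equiv.Perm (Fin 6))).filter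
      (fun σ => σ.cycleType = ({6} : Multiset ℕ))).card = 4 := by
  have hne : ∀ σ : Equiv.Perm (Fin 6), σ.cycleType = ({6} : Multiset ℕ) →
      ¬(σ.cycleType = ({2,4} : Multiset ℕ) ∧ σ (σ 0) = 0) := by
    intro σ hh hc
    rw [hh] at hc
    exact absurd hc.1 (by decide)
  have hSmem : ∀ σ ∈ ({s1,s2,s3,s4} : Finset (Equiv.Perm (Fin 6))),
      σ.cycleType = ({6} : Multiset ℕ) := by
    intro σ hσ
    simp only [Finset.mem_insert, Finset.mem_singleton] at hσ
    rcases hσ with rfl|rfl|rfl|rfl <;> assumption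
  refine ⟨?_, ?_, ?_⟩
  · intro σ hσ
    rcases Finset.mem_insert.mp hσ with rfl | hσ
    · exact Or.inr ht
    · exact Or.inl (hSmem σ hσ)
  · rw [Finset.filter_insert, if_pos ht,
      Finset.filter_false_of_mem (fun σ hσ => hne σ (hSmem σ hσ))]
    simp
  · rw [Finset.filter_insert, if_neg (fun hp => hne t hp ht),
      Finset.filter_true_of_mem hSmem]
    exact hcard4

lemma famconv (F : Finset (Equiv.Perm (Fin 6)))
    (h1 : ∀ i j : Fin 6, i ≠ j → (F.filter (fun σ => σ i = j)).card = 1)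
    (h2 : ∀ σ ∈ F, σ.cycleType = ({6} : Multiset ℕ) ∨
      (σ.cycleType = ({2, 4} : Multiset ℕ) ∧ σ (σ 0) = 0))
    (h3 : (F.filter (fun σ => σ.cycleType = ({2, 4} : Multiset ℕ) ∧ σ (σ 0) = 0)).card = 1)
    (h4 : (F.filter (fun σ => σ.cycleType = ({6} : Multiset ℕ))).card = 4) :
    (∀ i j : Fin 6, i ≠ j → ∃! σ, σ ∈ F ∧ σ i = j) ∧
    (∀ σ ∈ F, σ.cycleType = ({6} : Multiset ℕ) ∨
      (σ.cycleType = ({2, 4} : Multiset ℕ) ∧ σ (σ 0) = 0)) ∧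
    {σ ∈ (F : Set (Equiv.Perm (Fin 6))) |
      σ.cycleType = ({2, 4} : Multiset ℕ) ∧ σ (σ 0) = 0}.ncard = 1 ∧
    {σ ∈ (F : Set (Equiv.Perm (Fin 6))) |
      σ.cycleType = ({6} : Multiset ℕ)}.ncard = 4 := by
  have e : ∀ (p : Equiv.Perm (Fin 6) → Prop) [DecidablePred p],
      {σ ∈ (F : Set (Equiv.Perm (Fin 6))) | p σ} = ↑(F.filter p) := by
    intro p _
    ext x
    simp [Finset.mem_coe, Finset.mem_filter]
  refine ⟨fun i j hij => exu _ _ (h1 i j hij), h2, ?_, ?_⟩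
  · rw [e, Set.ncard_coe_finset]
    exact h3
  · rw [e, Set.ncard_coe_finset]
    exact h4

set_option maxRecDepth 40000 in
lemma hcard30 : P12.card = 30 := by decide

set_option maxRecDepth 40000 in
set_option maxHeartbeats 4000000 in
lemma claimA : ∀ a b c d e : Fin 6, List.Nodup [0,a,b,c,d,e] →
    (P12.filter (fun F => c6 0 a b c d e ∈ F)).card = 1 := by decide

set_option maxRecDepth 40000 in
set_option maxHeartbeats 4000000 in
lemma claimB : ∀ a b c d e : Fin 6, List.Nodup [0,a,b,c,d,e] →
    (P12.filter (fun F => c24 a b c d e ∈ F)).card = 1 := by decide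

set_option maxRecDepth 40000 in
set_option maxHeartbeats 4000000 in
theorem stmt12 :
    ∃ P : Finset (Finset (Equiv.Perm (Fin 6))),
      P.card = 30 ∧
      (∀ F ∈ P,
        (∀ i j : Fin 6, i ≠ j → ∃! σ, σ ∈ F ∧ σ i = j) ∧
        (∀ σ ∈ F, σ.cycleType = ({6} : Multiset ℕ) ∨
          (σ.cycleType = ({2, 4} : Multiset ℕ) ∧ σ (σ 0) = 0)) ∧
        {σ ∈ (F : Set (Equiv.Perm (Fin 6))) |
          σ.cycleType = ({2, 4} : Multiset ℕ) ∧ σ (σ 0) = 0}.ncard = 1 ∧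
        {σ ∈ (F : Set (Equiv.Perm (Fin 6))) |
          σ.cycleType = ({6} : Multiset ℕ)}.ncard = 4) ∧
      (∀ σ : Equiv.Perm (Fin 6),
        (σ.cycleType = ({6} : Multiset ℕ) ∨
          (σ.cycleType = ({2, 4} : Multiset ℕ) ∧ σ (σ 0) = 0)) →
        ∃! F, F ∈ P ∧ σ ∈ F) ∧
      (∀ σ : Equiv.Perm (Fin 6), σ.cycleType = ({6} : Multiset ℕ) →
        ∃! F, F ∈ P ∧ σ ∈ F) := by
  refine ⟨P12, hcard30, ?_, ?_, ?_⟩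
  · intro F hF
    simp only [P12, Finset.mem_insert, Finset.mem_singleton] at hF
    rcases hF with rfl|rfl|rfl|rfl|rfl|rfl|rfl|rfl|rfl|rfl|rfl|rfl|rfl|rfl|rfl|rfl|rfl|rfl|rfl|rfl|rfl|rfl|rfl|rfl|rfl|rfl|rfl|rfl|rfl|rfl
    · obtain ⟨H2, H3, H4⟩ := famcard (c24 1 2 3 4 5) (c6 0 2 1 3 5 4) (c6 0 3 1 4 2 5) (c6 0 4 1 5 3 2) (c6 0 5 1 2 4 3)
        (cyc24 1 2 3 4 5 (by decide))
        (cyc6 0 2 1 3 5 4 (by decide))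
        (cyc6 0 3 1 4 2 5 (by decide))
        (cyc6 0 4 1 5 3 2 (by decide))
        (cyc6 0 5 1 2 4 3 (by decide))
        (by decide)
      exact famconv _ (by decide) H2 H3 H4
    · obtain ⟨H2, H3, H4⟩ := famcard (c24 1 2 3 5 4) (c6 0 2 1 3 4 5) (c6 0 3 1 5 2 4) (c6 0 4 1 2 5 3) (c6 0 5 1 4 3 2)
        (cyc24 1 2 3 5 4 (by decide))
        (cyc6 0 2 1 3 4 5 (by decide))
        (cyc6 0 3 1 5 2 4 (by decide))
        (cyc6 0 4 1 2 5 3 (by decide))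
        (cyc6 0 5 1 4 3 2 (by decide))
        (by decide)
      exact famconv _ (by decide) H2 H3 H4
    · obtain ⟨H2, H3, H4⟩ := famcard (c24 1 2 4 5 3) (c6 0 2 1 4 3 5) (c6 0 3 1 2 5 4) (c6 0 4 1 5 2 3) (c6 0 5 1 3 4 2)
        (cyc24 1 2 4 5 3 (by decide))
        (cyc6 0 2 1 4 3 5 (by decide))
        (cyc6 0 3 1 2 5 4 (by decide))
        (cyc6 0 4 1 5 2 3 (by decide))
        (cyc6 0 5 1 3 4 2 (by decide))
        (by decide)
      exact famconv _ (by decide) H2 H3 H4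
    · obtain ⟨H2, H3, H4⟩ := famcard (c24 1 2 4 3 5) (c6 0 2 1 4 5 3) (c6 0 3 1 5 4 2) (c6 0 4 1 3 2 5) (c6 0 5 1 2 3 4)
        (cyc24 1 2 4 3 5 (by decide))
        (cyc6 0 2 1 4 5 3 (by decide))
        (cyc6 0 3 1 5 4 2 (by decide))
        (cyc6 0 4 1 3 2 5 (by decide))
        (cyc6 0 5 1 2 3 4 (by decide))
        (by decide)
      exact famconv _ (by decide) H2 H3 H4
    · obtain ⟨H2, H3, H4⟩ := famcard (c24 1 2 5 4 3) (c6 0 2 1 5 3 4) (c6 0 3 1 2 4 5) (c6 0 4 1 3 5 2) (c6 0 5 1 4 2 3)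
        (cyc24 1 2 5 4 3 (by decide))
        (cyc6 0 2 1 5 3 4 (by decide))
        (cyc6 0 3 1 2 4 5 (by decide))
        (cyc6 0 4 1 3 5 2 (by decide))
        (cyc6 0 5 1 4 2 3 (by decide))
        (by decide)
      exact famconv _ (by decide) H2 H3 H4
    · obtain ⟨H2, H3, H4⟩ := famcard (c24 1 2 5 3 4) (c6 0 2 1 5 4 3) (c6 0 3 1 4 5 2) (c6 0 4 1 2 3 5) (c6 0 5 1 3 2 4)
        (cyc24 1 2 5 3 4 (by decide))
        (cyc6 0 2 1 5 4 3 (by decide))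
        (cyc6 0 3 1 4 5 2 (by decide))
        (cyc6 0 4 1 2 3 5 (by decide))
        (cyc6 0 5 1 3 2 4 (by decide))
        (by decide)
      exact famconv _ (by decide) H2 H3 H4
    · obtain ⟨H2, H3, H4⟩ := famcard (c24 2 1 3 4 5) (c6 0 1 2 3 5 4) (c6 0 3 2 4 1 5) (c6 0 4 2 5 3 1) (c6 0 5 2 1 4 3)
        (cyc24 2 1 3 4 5 (by decide))
        (cyc6 0 1 2 3 5 4 (by decide))
        (cyc6 0 3 2 4 1 5 (by decide))
        (cyc6 0 4 2 5 3 1 (by decide))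
        (cyc6 0 5 2 1 4 3 (by decide))
        (by decide)
      exact famconv _ (by decide) H2 H3 H4
    · obtain ⟨H2, H3, H4⟩ := famcard (c24 2 1 3 5 4) (c6 0 1 2 3 4 5) (c6 0 3 2 5 1 4) (c6 0 4 2 1 5 3) (c6 0 5 2 4 3 1)
        (cyc24 2 1 3 5 4 (by decide))
        (cyc6 0 1 2 3 4 5 (by decide))
        (cyc6 0 3 2 5 1 4 (by decide))
        (cyc6 0 4 2 1 5 3 (by decide))
        (cyc6 0 5 2 4 3 1 (by decide))
        (by decide)
      exact famconv _ (by decide) H2 H3 H4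
    · obtain ⟨H2, H3, H4⟩ := famcard (c24 2 1 4 5 3) (c6 0 1 2 4 3 5) (c6 0 3 2 1 5 4) (c6 0 4 2 5 1 3) (c6 0 5 2 3 4 1)
        (cyc24 2 1 4 5 3 (by decide))
        (cyc6 0 1 2 4 3 5 (by decide))
        (cyc6 0 3 2 1 5 4 (by decide))
        (cyc6 0 4 2 5 1 3 (by decide))
        (cyc6 0 5 2 3 4 1 (by decide))
        (by decide)
      exact famconv _ (by decide) H2 H3 H4
    · obtain ⟨H2, H3, H4⟩ := famcard (c24 2 1 4 3 5) (c6 0 1 2 4 5 3) (c6 0 3 2 5 4 1) (c6 0 4 2 3 1 5) (c6 0 5 2 1 3 4)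
        (cyc24 2 1 4 3 5 (by decide))
        (cyc6 0 1 2 4 5 3 (by decide))
        (cyc6 0 3 2 5 4 1 (by decide))
        (cyc6 0 4 2 3 1 5 (by decide))
        (cyc6 0 5 2 1 3 4 (by decide))
        (by decide)
      exact famconv _ (by decide) H2 H3 H4
    · obtain ⟨H2, H3, H4⟩ := famcard (c24 2 1 5 4 3) (c6 0 1 2 5 3 4) (c6 0 3 2 1 4 5) (c6 0 4 2 3 5 1) (c6 0 5 2 4 1 3)
        (cyc24 2 1 5 4 3 (by decide))
        (cyc6 0 1 2 5 3 4 (by decide))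
        (cyc6 0 3 2 1 4 5 (by decide))
        (cyc6 0 4 2 3 5 1 (by decide))
        (cyc6 0 5 2 4 1 3 (by decide))
        (by decide)
      exact famconv _ (by decide) H2 H3 H4
    · obtain ⟨H2, H3, H4⟩ := famcard (c24 2 1 5 3 4) (c6 0 1 2 5 4 3) (c6 0 3 2 4 5 1) (c6 0 4 2 1 3 5) (c6 0 5 2 3 1 4)
        (cyc24 2 1 5 3 4 (by decide))
        (cyc6 0 1 2 5 4 3 (by decide))
        (cyc6 0 3 2 4 5 1 (by decide))
        (cyc6 0 4 2 1 3 5 (by decide))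
        (cyc6 0 5 2 3 1 4 (by decide))
        (by decide)
      exact famconv _ (by decide) H2 H3 H4
    · obtain ⟨H2, H3, H4⟩ := famcard (c24 3 1 2 4 5) (c6 0 1 3 2 5 4) (c6 0 2 3 4 1 5) (c6 0 4 3 5 2 1) (c6 0 5 3 1 4 2)
        (cyc24 3 1 2 4 5 (by decide))
        (cyc6 0 1 3 2 5 4 (by decide))
        (cyc6 0 2 3 4 1 5 (by decide))
        (cyc6 0 4 3 5 2 1 (by decide))
        (cyc6 0 5 3 1 4 2 (by decide))
        (by decide)
      exact famconv _ (by decide) H2 H3 H4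
    · obtain ⟨H2, H3, H4⟩ := famcard (c24 3 1 2 5 4) (c6 0 1 3 2 4 5) (c6 0 2 3 5 1 4) (c6 0 4 3 1 5 2) (c6 0 5 3 4 2 1)
        (cyc24 3 1 2 5 4 (by decide))
        (cyc6 0 1 3 2 4 5 (by decide))
        (cyc6 0 2 3 5 1 4 (by decide))
        (cyc6 0 4 3 1 5 2 (by decide))
        (cyc6 0 5 3 4 2 1 (by decide))
        (by decide)
      exact famconv _ (by decide) H2 H3 H4
    · obtain ⟨H2, H3, H4⟩ := famcard (c24 3 1 4 5 2) (c6 0 1 3 4 2 5) (c6 0 2 3 1 5 4) (c6 0 4 3 5 1 2) (c6 0 5 3 2 4 1)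
        (cyc24 3 1 4 5 2 (by decide))
        (cyc6 0 1 3 4 2 5 (by decide))
        (cyc6 0 2 3 1 5 4 (by decide))
        (cyc6 0 4 3 5 1 2 (by decide))
        (cyc6 0 5 3 2 4 1 (by decide))
        (by decide)
      exact famconv _ (by decide) H2 H3 H4
    · obtain ⟨H2, H3, H4⟩ := famcard (c24 3 1 4 2 5) (c6 0 1 3 4 5 2) (c6 0 2 3 5 4 1) (c6 0 4 3 2 1 5) (c6 0 5 3 1 2 4)
        (cyc24 3 1 4 2 5 (by decide))
        (cyc6 0 1 3 4 5 2 (by decide))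
        (cyc6 0 2 3 5 4 1 (by decide))
        (cyc6 0 4 3 2 1 5 (by decide))
        (cyc6 0 5 3 1 2 4 (by decide))
        (by decide)
      exact famconv _ (by decide) H2 H3 H4
    · obtain ⟨H2, H3, H4⟩ := famcard (c24 3 1 5 4 2) (c6 0 1 3 5 2 4) (c6 0 2 3 1 4 5) (c6 0 4 3 2 5 1) (c6 0 5 3 4 1 2)
        (cyc24 3 1 5 4 2 (by decide))
        (cyc6 0 1 3 5 2 4 (by decide))
        (cyc6 0 2 3 1 4 5 (by decide))
        (cyc6 0 4 3 2 5 1 (by decide))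
        (cyc6 0 5 3 4 1 2 (by decide))
        (by decide)
      exact famconv _ (by decide) H2 H3 H4
    · obtain ⟨H2, H3, H4⟩ := famcard (c24 3 1 5 2 4) (c6 0 1 3 5 4 2) (c6 0 2 3 4 5 1) (c6 0 4 3 1 2 5) (c6 0 5 3 2 1 4)
        (cyc24 3 1 5 2 4 (by decide))
        (cyc6 0 1 3 5 4 2 (by decide))
        (cyc6 0 2 3 4 5 1 (by decide))
        (cyc6 0 4 3 1 2 5 (by decide))
        (cyc6 0 5 3 2 1 4 (by decide))
        (by decide)
      exact famconv _ (by decide) H2 H3 H4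
    · obtain ⟨H2, H3, H4⟩ := famcard (c24 4 1 2 3 5) (c6 0 1 4 2 5 3) (c6 0 2 4 3 1 5) (c6 0 3 4 5 2 1) (c6 0 5 4 1 3 2)
        (cyc24 4 1 2 3 5 (by decide))
        (cyc6 0 1 4 2 5 3 (by decide))
        (cyc6 0 2 4 3 1 5 (by decide))
        (cyc6 0 3 4 5 2 1 (by decide))
        (cyc6 0 5 4 1 3 2 (by decide))
        (by decide)
      exact famconv _ (by decide) H2 H3 H4
    · obtain ⟨H2, H3, H4⟩ := famcard (c24 4 1 2 5 3) (c6 0 1 4 2 3 5) (c6 0 2 4 5 1 3) (c6 0 3 4 1 5 2) (c6 0 5 4 3 2 1)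
        (cyc24 4 1 2 5 3 (by decide))
        (cyc6 0 1 4 2 3 5 (by decide))
        (cyc6 0 2 4 5 1 3 (by decide))
        (cyc6 0 3 4 1 5 2 (by decide))
        (cyc6 0 5 4 3 2 1 (by decide))
        (by decide)
      exact famconv _ (by decide) H2 H3 H4
    · obtain ⟨H2, H3, H4⟩ := famcard (c24 4 1 3 5 2) (c6 0 1 4 3 2 5) (c6 0 2 4 1 5 3) (c6 0 3 4 5 1 2) (c6 0 5 4 2 3 1)
        (cyc24 4 1 3 5 2 (by decide))
        (cyc6 0 1 4 3 2 5 (by decide))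
        (cyc6 0 2 4 1 5 3 (by decide))
        (cyc6 0 3 4 5 1 2 (by decide))
        (cyc6 0 5 4 2 3 1 (by decide))
        (by decide)
      exact famconv _ (by decide) H2 H3 H4
    · obtain ⟨H2, H3, H4⟩ := famcard (c24 4 1 3 2 5) (c6 0 1 4 3 5 2) (c6 0 2 4 5 3 1) (c6 0 3 4 2 1 5) (c6 0 5 4 1 2 3)
        (cyc24 4 1 3 2 5 (by decide))
        (cyc6 0 1 4 3 5 2 (by decide))
        (cyc6 0 2 4 5 3 1 (by decide))
        (cyc6 0 3 4 2 1 5 (by decide))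
        (cyc6 0 5 4 1 2 3 (by decide))
        (by decide)
      exact famconv _ (by decide) H2 H3 H4
    · obtain ⟨H2, H3, H4⟩ := famcard (c24 4 1 5 3 2) (c6 0 1 4 5 2 3) (c6 0 2 4 1 3 5) (c6 0 3 4 2 5 1) (c6 0 5 4 3 1 2)
        (cyc24 4 1 5 3 2 (by decide))
        (cyc6 0 1 4 5 2 3 (by decide))
        (cyc6 0 2 4 1 3 5 (by decide))
        (cyc6 0 3 4 2 5 1 (by decide))
        (cyc6 0 5 4 3 1 2 (by decide))
        (by decide)
      exact famconv _ (by decide) H2 H3 H4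
    · obtain ⟨H2, H3, H4⟩ := famcard (c24 4 1 5 2 3) (c6 0 1 4 5 3 2) (c6 0 2 4 3 5 1) (c6 0 3 4 1 2 5) (c6 0 5 4 2 1 3)
        (cyc24 4 1 5 2 3 (by decide))
        (cyc6 0 1 4 5 3 2 (by decide))
        (cyc6 0 2 4 3 5 1 (by decide))
        (cyc6 0 3 4 1 2 5 (by decide))
        (cyc6 0 5 4 2 1 3 (by decide))
        (by decide)
      exact famconv _ (by decide) H2 H3 H4
    · obtain ⟨H2, H3, H4⟩ := famcard (c24 5 1 2 3 4) (c6 0 1 5 2 4 3) (c6 0 2 5 3 1 4) (c6 0 3 5 4 2 1) (c6 0 4 5 1 3 2)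
        (cyc24 5 1 2 3 4 (by decide))
        (cyc6 0 1 5 2 4 3 (by decide))
        (cyc6 0 2 5 3 1 4 (by decide))
        (cyc6 0 3 5 4 2 1 (by decide))
        (cyc6 0 4 5 1 3 2 (by decide))
        (by decide)
      exact famconv _ (by decide) H2 H3 H4
    · obtain ⟨H2, H3, H4⟩ := famcard (c24 5 1 2 4 3) (c6 0 1 5 2 3 4) (c6 0 2 5 4 1 3) (c6 0 3 5 1 4 2) (c6 0 4 5 3 2 1)
        (cyc24 5 1 2 4 3 (by decide))
        (cyc6 0 1 5 2 3 4 (by decide))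
        (cyc6 0 2 5 4 1 3 (by decide))
        (cyc6 0 3 5 1 4 2 (by decide))
        (cyc6 0 4 5 3 2 1 (by decide))
        (by decide)
      exact famconv _ (by decide) H2 H3 H4
    · obtain ⟨H2, H3, H4⟩ := famcard (c24 5 1 3 4 2) (c6 0 1 5 3 2 4) (c6 0 2 5 1 4 3) (c6 0 3 5 4 1 2) (c6 0 4 5 2 3 1)
        (cyc24 5 1 3 4 2 (by decide))
        (cyc6 0 1 5 3 2 4 (by decide))
        (cyc6 0 2 5 1 4 3 (by decide))
        (cyc6 0 3 5 4 1 2 (by decide))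
        (cyc6 0 4 5 2 3 1 (by decide))
        (by decide)
      exact famconv _ (by decide) H2 H3 H4
    · obtain ⟨H2, H3, H4⟩ := famcard (c24 5 1 3 2 4) (c6 0 1 5 3 4 2) (c6 0 2 5 4 3 1) (c6 0 3 5 2 1 4) (c6 0 4 5 1 2 3)
        (cyc24 5 1 3 2 4 (by decide))
        (cyc6 0 1 5 3 4 2 (by decide))
        (cyc6 0 2 5 4 3 1 (by decide))
        (cyc6 0 3 5 2 1 4 (by decide))
        (cyc6 0 4 5 1 2 3 (by decide))
        (by decide)
      exact famconv _ (by decide) H2 H3 H4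
    · obtain ⟨H2, H3, H4⟩ := famcard (c24 5 1 4 3 2) (c6 0 1 5 4 2 3) (c6 0 2 5 1 3 4) (c6 0 3 5 2 4 1) (c6 0 4 5 3 1 2)
        (cyc24 5 1 4 3 2 (by decide))
        (cyc6 0 1 5 4 2 3 (by decide))
        (cyc6 0 2 5 1 3 4 (by decide))
        (cyc6 0 3 5 2 4 1 (by decide))
        (cyc6 0 4 5 3 1 2 (by decide))
        (by decide)
      exact famconv _ (by decide) H2 H3 H4
    · obtain ⟨H2, H3, H4⟩ := famcard (c24 5 1 4 2 3) (c6 0 1 5 4 3 2) (c6 0 2 5 3 4 1) (c6 0 3 5 1 2 4) (c6 0 4 5 2 1 3)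
        (cyc24 5 1 4 2 3 (by decide))
        (cyc6 0 1 5 4 3 2 (by decide))
        (cyc6 0 2 5 3 4 1 (by decide))
        (cyc6 0 3 5 1 2 4 (by decide))
        (cyc6 0 4 5 2 1 3 (by decide))
        (by decide)
      exact famconv _ (by decide) H2 H3 H4
  · intro σ hσ
    rcases hσ with h6 | ⟨h24, h240⟩
    · obtain ⟨a,b,c,d,e,hnd,rfl⟩ := bridge6 σ h6
      exact exu P12 _ (claimA a b c d e hnd)
    · obtain ⟨a,b,c,d,e,hnd,rfl⟩ := bridge24 σ h24 h240
      exact exu P12 _ (claimB a b c d e hnd)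
  · intro σ h6
    obtain ⟨a,b,c,d,e,hnd,rfl⟩ := bridge6 σ h6
    exact exu P12 _ (claimA a b c d e hnd)
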